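/- Four-subspace decomposition of the unitary algebra. Let 𝔲(d) be the real Lie algebra of skew-Hermitian complex d×d matrices and let 𝔱 ⊆ 𝔲(d) be a real Lie subalgebra. Define: the center 𝔷(𝔱) = {x ∈ 𝔱 | ⁅x, y⁆ = 0 for all y ∈ 𝔱}; the centerless part 𝔱₀ = the trace-orthogonal complement of 𝔷(𝔱) within 𝔱; the commutant 𝔲^𝔱 = {x ∈ 𝔲(d) | ⁅x, y⁆ = 0 for all y ∈ 𝔱}; 𝔲^𝔱₀ = the trace-orthogonal complement of 𝔷(𝔱) within 𝔲^𝔱; and 𝔯 = the trace-orthogonal complement of 𝔲^𝔱 + 𝔱 within 𝔲(d). Assume 𝔱₀ is spanned by commutators of its own elements (𝔱₀ = ⁅𝔱₀, 𝔱₀⁆, which holds when 𝔱 is the Lie algebra of a compact group). Then the four real subspaces 𝔯, 𝔲^𝔱₀, 𝔷(𝔱), 𝔱₀ are pairwise trace-orthogonal, 𝔲(d) is their internal direct sum, and each of 𝔷(𝔱), 𝔱₀, 𝔲^𝔱₀ is closed under the commutator (a Lie subalgebra of 𝔲(d)). -/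

import Mathlib

noncomputable section

open Matrix


namespace UnitaryDecompAux

variable {d : ℕ}

lemma trace_flip (x y : Matrix (Fin d) (Fin d) ℂ) :
    (xᴴ * y).trace = starRingEnd ℂ ((yᴴ * x).trace) := by
  have h : ((yᴴ * x)ᴴ).trace = star ((yᴴ * x).trace) := trace_conjTranspose _
  rw [conjTranspose_mul, conjTranspose_conjTranspose] at h
  exact h

lemma trace_symm {x y : Matrix (Fin d) (Fin d) ℂ} (hx : xᴴ = -x) (hy : yᴴ = -y) :
    (xᴴ * y).trace = (yᴴ * x).trace := by
  rw [hx, hy, neg_mul, neg_mul, trace_neg, trace_neg, trace_mul_comm]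

lemma trace_im_zero {x y : Matrix (Fin d) (Fin d) ℂ} (hx : xᴴ = -x) (hy : yᴴ = -y) :
    ((xᴴ * y).trace).im = 0 := by
  have h : starRingEnd ℂ ((xᴴ * y).trace) = (xᴴ * y).trace := by
    conv_rhs => rw [trace_symm hx hy, trace_flip]
  exact Complex.conj_eq_iff_im.mp h

lemma trace_re_self (x : Matrix (Fin d) (Fin d) ℂ) :
    ((xᴴ * x).trace).re = ∑ i, ∑ j, Complex.normSq (x j i) := by
  simp only [Matrix.trace, Matrix.diag, Matrix.mul_apply, Matrix.conjTranspose_apply,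
    Complex.re_sum]
  refine Finset.sum_congr rfl fun i _ => Finset.sum_congr rfl fun j _ => ?_
  simp [Complex.mul_re, Complex.normSq_apply, Complex.star_def]

def matCore (d : ℕ) : InnerProductSpace.Core ℝ (Matrix (Fin d) (Fin d) ℂ) where
  inner x y := ((xᴴ * y).trace).re
  conj_inner_symm x y := by
    simp only [starRingEnd_apply, star_trivial]
    rw [trace_flip]
    simp
  re_inner_nonneg x := by
    simp only [RCLike.re_to_real]
    rw [trace_re_self]
    exact Finset.sum_nonneg fun i _ => Finset.sum_nonneg fun j _ => Complex.normSq_nonneg _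
  definite x hx := by
    replace hx : ((xᴴ * x).trace).re = 0 := hx
    rw [trace_re_self] at hx
    have h1 := (Finset.sum_eq_zero_iff_of_nonneg
      (fun i _ => Finset.sum_nonneg fun j _ => Complex.normSq_nonneg (x j i))).mp hx
    ext i j
    have h2 := (Finset.sum_eq_zero_iff_of_nonneg
      (fun k _ => Complex.normSq_nonneg (x k j))).mp (h1 j (Finset.mem_univ j)) i
      (Finset.mem_univ i)
    simpa using Complex.normSq_eq_zero.mp h2
  add_left x y z := by
    simp [conjTranspose_add, add_mul, trace_add, Complex.add_re]
  smul_left x y r := by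
    simp only [conjTranspose_smul, star_trivial, Matrix.smul_mul, trace_smul,
      starRingEnd_apply, star_trivial]
    rw [Complex.real_smul, Complex.re_ofReal_mul]

noncomputable instance (d : ℕ) : NormedAddCommGroup (Matrix (Fin d) (Fin d) ℂ) :=
  (matCore d).toNormedAddCommGroup

noncomputable instance (d : ℕ) : InnerProductSpace ℝ (Matrix (Fin d) (Fin d) ℂ) :=
  InnerProductSpace.ofCore (matCore d).toCore

lemma inner_def (x y : Matrix (Fin d) (Fin d) ℂ) :
    (inner ℝ x y : ℝ) = ((xᴴ * y).trace).re := rfl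

end UnitaryDecompAux


/-- The real vector space `𝔲(d)` of skew-Hermitian complex `d × d` matrices. -/
def unitaryAlgebra (d : ℕ) : Submodule ℝ (Matrix (Fin d) (Fin d) ℂ) where
  carrier := {x | xᴴ = -x}
  add_mem' := by
    intro a b ha hb
    simp only [Set.mem_setOf_eq] at *
    rw [conjTranspose_add, ha, hb, neg_add]
  zero_mem' := by simp
  smul_mem' := by
    intro r a ha
    simp only [Set.mem_setOf_eq] at *
    rw [conjTranspose_smul, ha, star_trivial, smul_neg]

/-- The center `𝔷(𝔱)` of a real subspace `𝔱` of matrices: the elements of `𝔱`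
commuting with every element of `𝔱`. -/
def centerOf {d : ℕ} (𝔱 : Submodule ℝ (Matrix (Fin d) (Fin d) ℂ)) :
    Submodule ℝ (Matrix (Fin d) (Fin d) ℂ) where
  carrier := {x | x ∈ 𝔱 ∧ ∀ y ∈ 𝔱, x * y = y * x}
  add_mem' := by
    rintro a b ⟨ha, ha'⟩ ⟨hb, hb'⟩
    exact ⟨𝔱.add_mem ha hb, fun y hy => by rw [add_mul, mul_add, ha' y hy, hb' y hy]⟩
  zero_mem' := ⟨𝔱.zero_mem, fun y _ => by rw [zero_mul, mul_zero]⟩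
  smul_mem' := by
    rintro r a ⟨ha, ha'⟩
    exact ⟨𝔱.smul_mem r ha, fun y hy => by
      rw [Matrix.smul_mul, ha' y hy, Matrix.mul_smul]⟩

/-- The commutant `𝔲^𝔱` of `𝔱` in `𝔲(d)`: the skew-Hermitian matrices commuting
with every element of `𝔱`. -/
def commutantIn (d : ℕ) (𝔱 : Submodule ℝ (Matrix (Fin d) (Fin d) ℂ)) :
    Submodule ℝ (Matrix (Fin d) (Fin d) ℂ) where
  carrier := {x | x ∈ unitaryAlgebra d ∧ ∀ y ∈ 𝔱, x * y = y * x}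
  add_mem' := by
    rintro a b ⟨ha, ha'⟩ ⟨hb, hb'⟩
    exact ⟨(unitaryAlgebra d).add_mem ha hb,
      fun y hy => by rw [add_mul, mul_add, ha' y hy, hb' y hy]⟩
  zero_mem' := ⟨(unitaryAlgebra d).zero_mem, fun y _ => by rw [zero_mul, mul_zero]⟩
  smul_mem' := by
    rintro r a ⟨ha, ha'⟩
    exact ⟨(unitaryAlgebra d).smul_mem r ha, fun y hy => by
      rw [Matrix.smul_mul, ha' y hy, Matrix.mul_smul]⟩

/-- The trace-orthogonal complement of `V` within `W`:
`{x ∈ W | tr (zᴴ * x) = 0 for all z ∈ V}`. -/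
def traceOrthCompl {d : ℕ} (V W : Submodule ℝ (Matrix (Fin d) (Fin d) ℂ)) :
    Submodule ℝ (Matrix (Fin d) (Fin d) ℂ) where
  carrier := {x | x ∈ W ∧ ∀ z ∈ V, (zᴴ * x).trace = 0}
  add_mem' := by
    rintro a b ⟨ha, ha'⟩ ⟨hb, hb'⟩
    exact ⟨W.add_mem ha hb, fun z hz => by
      rw [mul_add, trace_add, ha' z hz, hb' z hz, add_zero]⟩
  zero_mem' := ⟨W.zero_mem, fun z _ => by rw [mul_zero, trace_zero]⟩
  smul_mem' := by
    rintro r a ⟨ha, ha'⟩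
    exact ⟨W.smul_mem r ha, fun z hz => by
      rw [Matrix.mul_smul, trace_smul, ha' z hz, smul_zero]⟩


section MoreAux
open UnitaryDecompAux

variable {d : ℕ}

lemma mem_unitaryAlgebra_iff {x : Matrix (Fin d) (Fin d) ℂ} :
    x ∈ unitaryAlgebra d ↔ xᴴ = -x := Iff.rfl

lemma mem_traceOrthCompl_iff {V W : Submodule ℝ (Matrix (Fin d) (Fin d) ℂ)}
    {x : Matrix (Fin d) (Fin d) ℂ} :
    x ∈ traceOrthCompl V W ↔ x ∈ W ∧ ∀ z ∈ V, (zᴴ * x).trace = 0 := Iff.rfl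

lemma mem_centerOf_iff {𝔱 : Submodule ℝ (Matrix (Fin d) (Fin d) ℂ)}
    {x : Matrix (Fin d) (Fin d) ℂ} :
    x ∈ centerOf 𝔱 ↔ x ∈ 𝔱 ∧ ∀ y ∈ 𝔱, x * y = y * x := Iff.rfl

lemma mem_commutantIn_iff {𝔱 : Submodule ℝ (Matrix (Fin d) (Fin d) ℂ)}
    {x : Matrix (Fin d) (Fin d) ℂ} :
    x ∈ commutantIn d 𝔱 ↔ x ∈ unitaryAlgebra d ∧ ∀ y ∈ 𝔱, x * y = y * x := Iff.rfl

lemma traceOrthCompl_eq {V W : Submodule ℝ (Matrix (Fin d) (Fin d) ℂ)}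
    (hV : V ≤ unitaryAlgebra d) (hW : W ≤ unitaryAlgebra d) :
    traceOrthCompl V W = Vᗮ ⊓ W := by
  ext x
  rw [mem_traceOrthCompl_iff, Submodule.mem_inf, Submodule.mem_orthogonal]
  constructor
  · rintro ⟨hxW, hx⟩
    exact ⟨fun z hz => by rw [inner_def, hx z hz, Complex.zero_re], hxW⟩
  · rintro ⟨hx, hxW⟩
    refine ⟨hxW, fun z hz => ?_⟩
    have h1 := hx z hz
    rw [inner_def] at h1
    have h2 := trace_im_zero (hV hz) (hW hxW)
    exact Complex.ext (by simpa using h1) (by simpa using h2)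

/-- Key commutator trace identity. -/
lemma key_trace {z x y : Matrix (Fin d) (Fin d) ℂ} (hz : zᴴ = -z) (hzx : z * x = x * z) :
    (zᴴ * (x * y - y * x)).trace = 0 := by
  rw [hz, neg_mul, trace_neg, mul_sub, trace_sub]
  have h : (z * (x * y)).trace = (z * (y * x)).trace := by
    calc (z * (x * y)).trace = ((z * x) * y).trace := by rw [mul_assoc]
    _ = ((x * z) * y).trace := by rw [hzx]
    _ = ((z * y) * x).trace := by rw [mul_assoc, trace_mul_comm, mul_assoc]
    _ = (z * (y * x)).trace := by rw [mul_assoc]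
  rw [h, sub_self, neg_zero]

end MoreAux

/-- Four-subspace decomposition of the unitary algebra `𝔲(d)` with
respect to a real Lie subalgebra `𝔱` of skew-Hermitian matrices whose centerless part
`𝔱₀` is perfect: the subspaces `𝔯`, `𝔲^𝔱₀`, `𝔷(𝔱)`, `𝔱₀` are pairwise
trace-orthogonal, `𝔲(d)` is their internal direct sum, and each of `𝔷(𝔱)`, `𝔱₀`,
`𝔲^𝔱₀` is closed under the commutator. -/
theorem unitaryAlgebra_four_subspace_decomposition (d : ℕ) (hd : 1 ≤ d)
    (𝔱 : Submodule ℝ (Matrix (Fin d) (Fin d) ℂ))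
    (h𝔱u : 𝔱 ≤ unitaryAlgebra d)
    (h𝔱cl : ∀ x ∈ 𝔱, ∀ y ∈ 𝔱, x * y - y * x ∈ 𝔱)
    (𝔷 𝔱₀ u𝔱 u𝔱₀ 𝔯 : Submodule ℝ (Matrix (Fin d) (Fin d) ℂ))
    (h𝔷 : 𝔷 = centerOf 𝔱)
    (h𝔱₀ : 𝔱₀ = traceOrthCompl 𝔷 𝔱)
    (hu𝔱 : u𝔱 = commutantIn d 𝔱)
    (hu𝔱₀ : u𝔱₀ = traceOrthCompl 𝔷 u𝔱)
    (h𝔯 : 𝔯 = traceOrthCompl (u𝔱 ⊔ 𝔱) (unitaryAlgebra d))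
    (hperfect : 𝔱₀ ≤ Submodule.span ℝ
      {m : Matrix (Fin d) (Fin d) ℂ | ∃ x₁ ∈ 𝔱₀, ∃ x₂ ∈ 𝔱₀, m = x₁ * x₂ - x₂ * x₁}) :
    (∀ i j : Fin 4, i ≠ j →
      ∀ x ∈ ![𝔯, u𝔱₀, 𝔷, 𝔱₀] i, ∀ y ∈ ![𝔯, u𝔱₀, 𝔷, 𝔱₀] j, (xᴴ * y).trace = 0) ∧
    iSupIndep ![𝔯, u𝔱₀, 𝔷, 𝔱₀] ∧
    (⨆ i : Fin 4, ![𝔯, u𝔱₀, 𝔷, 𝔱₀] i) = unitaryAlgebra d ∧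
    (∀ x ∈ 𝔷, ∀ y ∈ 𝔷, x * y - y * x ∈ 𝔷) ∧
    (∀ x ∈ 𝔱₀, ∀ y ∈ 𝔱₀, x * y - y * x ∈ 𝔱₀) ∧
    (∀ x ∈ u𝔱₀, ∀ y ∈ u𝔱₀, x * y - y * x ∈ u𝔱₀)  := by
  classical
  -- basic inclusion facts
  have h𝔷𝔱 : 𝔷 ≤ 𝔱 := by rw [h𝔷]; rintro x ⟨hx, -⟩; exact hx
  have h𝔱₀𝔱 : 𝔱₀ ≤ 𝔱 := by rw [h𝔱₀]; rintro x ⟨hx, -⟩; exact hx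
  have hu𝔱u : u𝔱 ≤ unitaryAlgebra d := by rw [hu𝔱]; rintro x ⟨hx, -⟩; exact hx
  have hu𝔱₀u𝔱 : u𝔱₀ ≤ u𝔱 := by rw [hu𝔱₀]; rintro x ⟨hx, -⟩; exact hx
  have h𝔯u : 𝔯 ≤ unitaryAlgebra d := by rw [h𝔯]; rintro x ⟨hx, -⟩; exact hx
  have hsupu : u𝔱 ⊔ 𝔱 ≤ unitaryAlgebra d := sup_le hu𝔱u h𝔱u
  have h𝔷u : 𝔷 ≤ unitaryAlgebra d := le_trans h𝔷𝔱 h𝔱u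
  have h𝔱₀u : 𝔱₀ ≤ unitaryAlgebra d := le_trans h𝔱₀𝔱 h𝔱u
  have hu𝔱₀u : u𝔱₀ ≤ unitaryAlgebra d := le_trans hu𝔱₀u𝔱 hu𝔱u
  have h𝔷u𝔱 : 𝔷 ≤ u𝔱 := by
    rw [h𝔷, hu𝔱]; rintro x ⟨hx, hc⟩; exact ⟨h𝔱u hx, hc⟩
  -- one-sided orthogonality facts
  have o𝔷𝔱₀ : ∀ x ∈ 𝔷, ∀ y ∈ 𝔱₀, (xᴴ * y).trace = 0 := by
    rw [h𝔱₀]; rintro x hx y ⟨-, hy⟩; exact hy x hx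
  have o𝔷u𝔱₀ : ∀ x ∈ 𝔷, ∀ y ∈ u𝔱₀, (xᴴ * y).trace = 0 := by
    rw [hu𝔱₀]; rintro x hx y ⟨-, hy⟩; exact hy x hx
  have osup𝔯 : ∀ x ∈ u𝔱 ⊔ 𝔱, ∀ y ∈ 𝔯, (xᴴ * y).trace = 0 := by
    rw [h𝔯]; rintro x hx y ⟨-, hy⟩; exact hy x hx
  -- flipping orthogonality
  have flip : ∀ {A B : Submodule ℝ (Matrix (Fin d) (Fin d) ℂ)},
      A ≤ unitaryAlgebra d → B ≤ unitaryAlgebra d →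
      (∀ x ∈ A, ∀ y ∈ B, (xᴴ * y).trace = 0) →
      ∀ x ∈ B, ∀ y ∈ A, (xᴴ * y).trace = 0 := by
    intro A B hA hB h x hx y hy
    rw [UnitaryDecompAux.trace_symm (hB hx) (hA hy)]
    exact h y hy x hx
  -- u𝔱₀ ⊥ 𝔱₀ via perfectness
  have ou𝔱₀𝔱₀ : ∀ x ∈ u𝔱₀, ∀ y ∈ 𝔱₀, (xᴴ * y).trace = 0 := by
    intro x hx y hy
    have hxu𝔱 : x ∈ u𝔱 := hu𝔱₀u𝔱 hx
    rw [hu𝔱, mem_commutantIn_iff] at hxu𝔱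
    obtain ⟨hxu, hxc⟩ := hxu𝔱
    refine Submodule.span_induction ?_ ?_ ?_ ?_ (hperfect hy)
    · rintro m ⟨a, ha, b, hb, rfl⟩ 
      exact key_trace hxu (hxc a (h𝔱₀𝔱 ha))
    · simp
    · intro u v _ _ hu hv
      rw [mul_add, trace_add, hu, hv, add_zero]
    · intro r u _ hu
      rw [Matrix.mul_smul, trace_smul, hu, smul_zero]
  -- all ordered orthogonality facts
  have o𝔯sup : ∀ x ∈ 𝔯, ∀ y ∈ u𝔱 ⊔ 𝔱, (xᴴ * y).trace = 0 := flip hsupu h𝔯u osup𝔯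
  have a01 : ∀ x ∈ 𝔯, ∀ y ∈ u𝔱₀, (xᴴ * y).trace = 0 :=
    fun x hx y hy => o𝔯sup x hx y (le_sup_left (a := u𝔱) (hu𝔱₀u𝔱 hy))
  have a02 : ∀ x ∈ 𝔯, ∀ y ∈ 𝔷, (xᴴ * y).trace = 0 :=
    fun x hx y hy => o𝔯sup x hx y (le_sup_right (a := u𝔱) (h𝔷𝔱 hy))
  have a03 : ∀ x ∈ 𝔯, ∀ y ∈ 𝔱₀, (xᴴ * y).trace = 0 :=
    fun x hx y hy => o𝔯sup x hx y (le_sup_right (a := u𝔱) (h𝔱₀𝔱 hy))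
  have a10 : ∀ x ∈ u𝔱₀, ∀ y ∈ 𝔯, (xᴴ * y).trace = 0 := flip h𝔯u hu𝔱₀u a01
  have a12 : ∀ x ∈ u𝔱₀, ∀ y ∈ 𝔷, (xᴴ * y).trace = 0 := flip h𝔷u hu𝔱₀u o𝔷u𝔱₀
  have a13 : ∀ x ∈ u𝔱₀, ∀ y ∈ 𝔱₀, (xᴴ * y).trace = 0 := ou𝔱₀𝔱₀
  have a20 : ∀ x ∈ 𝔷, ∀ y ∈ 𝔯, (xᴴ * y).trace = 0 := flip h𝔯u h𝔷u a02
  have a21 : ∀ x ∈ 𝔷, ∀ y ∈ u𝔱₀, (xᴴ * y).trace = 0 := o𝔷u𝔱₀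
  have a23 : ∀ x ∈ 𝔷, ∀ y ∈ 𝔱₀, (xᴴ * y).trace = 0 := o𝔷𝔱₀
  have a30 : ∀ x ∈ 𝔱₀, ∀ y ∈ 𝔯, (xᴴ * y).trace = 0 := flip h𝔯u h𝔱₀u a03
  have a31 : ∀ x ∈ 𝔱₀, ∀ y ∈ u𝔱₀, (xᴴ * y).trace = 0 := flip hu𝔱₀u h𝔱₀u a13
  have a32 : ∀ x ∈ 𝔱₀, ∀ y ∈ 𝔷, (xᴴ * y).trace = 0 := flip h𝔷u h𝔱₀u a23
  have part1 : ∀ i j : Fin 4, i ≠ j →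
      ∀ x ∈ ![𝔯, u𝔱₀, 𝔷, 𝔱₀] i, ∀ y ∈ ![𝔯, u𝔱₀, 𝔷, 𝔱₀] j, (xᴴ * y).trace = 0 := by
    intro i j hij
    fin_cases i <;> fin_cases j <;>
      simp only [Matrix.cons_val_zero, Matrix.cons_val_one, Matrix.head_cons,
        Matrix.cons_val_two, Matrix.tail_cons, Matrix.cons_val_three, ne_eq] <;>
      first
        | exact absurd rfl hij
        | exact a01 | exact a02 | exact a03
        | exact a10 | exact a12 | exact a13
        | exact a20 | exact a21 | exact a23
        | exact a30 | exact a31 | exact a32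
  -- orthogonal-complement descriptions
  have e𝔱₀ : 𝔱₀ = 𝔷ᗮ ⊓ 𝔱 := by rw [h𝔱₀, traceOrthCompl_eq h𝔷u h𝔱u]
  have eu𝔱₀ : u𝔱₀ = 𝔷ᗮ ⊓ u𝔱 := by rw [hu𝔱₀, traceOrthCompl_eq h𝔷u hu𝔱u]
  have e𝔯 : 𝔯 = (u𝔱 ⊔ 𝔱)ᗮ ⊓ unitaryAlgebra d := by
    rw [h𝔯, traceOrthCompl_eq hsupu le_rfl]
  have dec𝔱 : 𝔷 ⊔ 𝔱₀ = 𝔱 := by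
    rw [e𝔱₀]; exact Submodule.sup_orthogonal_inf_of_hasOrthogonalProjection h𝔷𝔱
  have decu𝔱 : 𝔷 ⊔ u𝔱₀ = u𝔱 := by
    rw [eu𝔱₀]; exact Submodule.sup_orthogonal_inf_of_hasOrthogonalProjection h𝔷u𝔱
  have dec𝔲 : (u𝔱 ⊔ 𝔱) ⊔ 𝔯 = unitaryAlgebra d := by
    rw [e𝔯]; exact Submodule.sup_orthogonal_inf_of_hasOrthogonalProjection hsupu
  -- the sup
  have hsup : (⨆ i : Fin 4, ![𝔯, u𝔱₀, 𝔷, 𝔱₀] i) = unitaryAlgebra d := by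
    have l0 : 𝔯 ≤ ⨆ i : Fin 4, ![𝔯, u𝔱₀, 𝔷, 𝔱₀] i := by
      simpa using le_iSup ![𝔯, u𝔱₀, 𝔷, 𝔱₀] (0 : Fin 4)
    have l1 : u𝔱₀ ≤ ⨆ i : Fin 4, ![𝔯, u𝔱₀, 𝔷, 𝔱₀] i := by
      simpa using le_iSup ![𝔯, u𝔱₀, 𝔷, 𝔱₀] (1 : Fin 4)
    have l2 : 𝔷 ≤ ⨆ i : Fin 4, ![𝔯, u𝔱₀, 𝔷, 𝔱₀] i := by
      simpa using le_iSup ![𝔯, u𝔱₀, 𝔷, 𝔱₀] (2 : Fin 4)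
    have l3 : 𝔱₀ ≤ ⨆ i : Fin 4, ![𝔯, u𝔱₀, 𝔷, 𝔱₀] i := by
      simpa using le_iSup ![𝔯, u𝔱₀, 𝔷, 𝔱₀] (3 : Fin 4)
    refine le_antisymm (iSup_le fun i => ?_) ?_
    · fin_cases i <;>
        simp only [Matrix.cons_val_zero, Matrix.cons_val_one, Matrix.head_cons,
          Matrix.cons_val_two, Matrix.tail_cons, Matrix.cons_val_three]
      exacts [h𝔯u, hu𝔱₀u, h𝔷u, h𝔱₀u]
    · rw [← dec𝔲]
      refine sup_le (sup_le ?_ ?_) l0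
      · rw [← decu𝔱]; exact sup_le l2 l1
      · rw [← dec𝔱]; exact sup_le l2 l3
  -- independence
  have hfam : OrthogonalFamily ℝ (fun i => ↥(![𝔯, u𝔱₀, 𝔷, 𝔱₀] i))
      (fun i => (![𝔯, u𝔱₀, 𝔷, 𝔱₀] i).subtypeₗᵢ) := by
    intro i j hij u v
    have h := part1 i j hij u u.2 v v.2
    show (inner ℝ ((u : Matrix (Fin d) (Fin d) ℂ)) ((v : Matrix (Fin d) (Fin d) ℂ)) : ℝ) = 0
    rw [UnitaryDecompAux.inner_def, h, Complex.zero_re]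
  -- closures
  have c𝔷 : ∀ x ∈ 𝔷, ∀ y ∈ 𝔷, x * y - y * x ∈ 𝔷 := by
    intro x hx y hy
    have hx' := hx; rw [h𝔷, mem_centerOf_iff] at hx'
    have : x * y - y * x = 0 := by rw [hx'.2 y (h𝔷𝔱 hy), sub_self]
    rw [this]; exact 𝔷.zero_mem
  have c𝔱₀ : ∀ x ∈ 𝔱₀, ∀ y ∈ 𝔱₀, x * y - y * x ∈ 𝔱₀ := by
    intro x hx y hy
    rw [h𝔱₀, mem_traceOrthCompl_iff]
    refine ⟨h𝔱cl x (h𝔱₀𝔱 hx) y (h𝔱₀𝔱 hy), fun z hz => ?_⟩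
    have hz' := hz; rw [h𝔷, mem_centerOf_iff] at hz'
    exact key_trace (h𝔷u hz) (hz'.2 x (h𝔱₀𝔱 hx))
  have cu𝔱₀ : ∀ x ∈ u𝔱₀, ∀ y ∈ u𝔱₀, x * y - y * x ∈ u𝔱₀ := by
    intro x hx y hy
    have hxm : x ∈ u𝔱 := hu𝔱₀u𝔱 hx
    have hym : y ∈ u𝔱 := hu𝔱₀u𝔱 hy
    rw [hu𝔱, mem_commutantIn_iff] at hxm hym
    obtain ⟨hxu, hxc⟩ := hxm
    obtain ⟨hyu, hyc⟩ := hym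
    rw [mem_unitaryAlgebra_iff] at hxu hyu
    rw [hu𝔱₀, mem_traceOrthCompl_iff]
    constructor
    · rw [hu𝔱, mem_commutantIn_iff]
      constructor
      · rw [mem_unitaryAlgebra_iff, conjTranspose_sub, conjTranspose_mul,
          conjTranspose_mul, hxu, hyu]
        simp only [neg_mul, mul_neg, neg_neg, neg_sub]
      · intro t ht
        have h1 : x * y * t = t * (x * y) := by
          rw [mul_assoc, hyc t ht, ← mul_assoc, hxc t ht, mul_assoc]
        have h2 : y * x * t = t * (y * x) := by
          rw [mul_assoc, hxc t ht, ← mul_assoc, hyc t ht, mul_assoc]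
        rw [sub_mul, mul_sub, h1, h2]
    · intro z hz
      have hz' := hz; rw [h𝔷, mem_centerOf_iff] at hz'
      exact key_trace (h𝔷u hz) ((hxc z hz'.1).symm)
  exact ⟨part1, hfam.independent, hsup, c𝔷, c𝔱₀, cu𝔱₀⟩

end
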